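/- Let H be a finitely generated group with trivial center, A a finitely generated abelian group, and φ the automorphism of H × A given by φ(h, a) = (ψ(h), α(h)·γ(a)), where ψ is an automorphism of H, γ is an automorphism of A, and α : H → A is a homomorphism. Then Fix φ is finitely generated if and only if both Fix ψ and the subgroup P_φ = {h ∈ Fix ψ | ∃ a ∈ A, α(h) = γ(a)·a⁻¹} are finitely generated. -/

import Mathlib

/-- The subgroup of fixed points of an automorphism `φ` of `G`:
`Fix φ = {g ∈ G | φ(g) = g}`. -/
def fixedSubgroup {G : Type*} [Group G] (φ : G ≃* G) : Subgroup G where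
  carrier := {g | φ g = g}
  one_mem' := map_one φ
  mul_mem' := by
    intro a b ha hb
    simp only [Set.mem_setOf_eq, map_mul] at *
    rw [ha, hb]
  inv_mem' := by
    intro a ha
    simp only [Set.mem_setOf_eq, map_inv] at *
    rw [ha]

/-- The subgroup `P_φ = {h ∈ Fix ψ | ∃ a ∈ A, α(h) = γ(a)·a⁻¹}` of `H`. -/
def Pdp {H A : Type*} [Group H] [CommGroup A] (ψ : H ≃* H) (γ : A ≃* A)
    (α : H →* A) : Subgroup H where
  carrier := {h | ψ h = h ∧ ∃ a : A, α h = γ a * a⁻¹}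
  one_mem' := ⟨map_one ψ, 1, by simp⟩
  mul_mem' := by
    rintro x y ⟨hx, a, ha⟩ ⟨hy, b, hb⟩
    refine ⟨by rw [map_mul, hx, hy], a * b, ?_⟩
    rw [map_mul, ha, hb, map_mul, mul_inv]
    exact mul_mul_mul_comm _ _ _ _
  inv_mem' := by
    rintro x ⟨hx, a, ha⟩
    refine ⟨by rw [map_inv, hx], a⁻¹, ?_⟩
    rw [map_inv, ha, map_inv, inv_inv, mul_inv, inv_inv]

/-- Any subgroup of a finitely generated commutative group is finitely generated. -/
lemma fg_subgroup_of_comm_fg {A : Type*} [CommGroup A] (hA : Group.FG A) (B : Subgroup A) :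
    Group.FG B := by
  rw [Group.fg_iff_subgroup_fg, Subgroup.fg_iff_add_fg]
  haveI : Group.FG A := hA
  haveI : Module.Finite ℤ (Additive A) := Module.Finite.iff_addGroup_fg.mpr inferInstance
  have h := IsNoetherian.noetherian (AddSubgroup.toIntSubmodule B.toAddSubgroup)
  rwa [Submodule.fg_iff_addSubgroup_fg, AddSubgroup.toIntSubmodule_toAddSubgroup] at h

/-- Extension lemma: if a homomorphism has finitely generated kernel and range,
then the domain is finitely generated. -/
lemma fg_of_ker_range_fg {G Q : Type*} [Group G] [Group Q] (f : G →* Q)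
    (hk : Group.FG f.ker) (hr : Group.FG f.range) : Group.FG G := by
  obtain ⟨S, hS, hSfin⟩ := (Subgroup.fg_iff _).mp ((Group.fg_iff_subgroup_fg _).mp hk)
  obtain ⟨T, hT, hTfin⟩ := (Subgroup.fg_iff _).mp ((Group.fg_iff_subgroup_fg _).mp hr)
  have hTsub : ∀ t ∈ T, t ∈ Set.range f := by
    intro t ht
    have : t ∈ f.range := by rw [← hT]; exact Subgroup.subset_closure ht
    exact this
  classical
  set sec : Q → G := fun t => if h : t ∈ Set.range f then h.choose else 1 with hsecdef
  have hsec : ∀ t ∈ T, f (sec t) = t := by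
    intro t ht
    simp only [hsecdef, dif_pos (hTsub t ht)]
    exact (hTsub t ht).choose_spec
  set T' := sec '' T with hT'def
  have hImg : f '' T' = T := by
    rw [hT'def, Set.image_image, Set.image_congr hsec]
    exact Set.image_id' T
  refine Group.fg_iff.mpr ⟨S ∪ T', ?_, hSfin.union (hTfin.image sec)⟩
  rw [eq_top_iff]
  intro g _
  have h1 : f g ∈ Subgroup.closure T := by rw [hT]; exact ⟨g, rfl⟩
  rw [← hImg, ← MonoidHom.map_closure] at h1
  obtain ⟨t, ht, hft⟩ := h1
  have hk1 : g * t⁻¹ ∈ Subgroup.closure S := by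
    rw [hS, MonoidHom.mem_ker, map_mul, map_inv, hft, mul_inv_cancel]
  have hgeq : g = (g * t⁻¹) * t := by group
  rw [hgeq]
  exact mul_mem (Subgroup.closure_mono Set.subset_union_left hk1)
    (Subgroup.closure_mono Set.subset_union_right ht)

/-- For `φ(h,a) = (ψ(h), α(h)·γ(a))` on `H × A` with `H` finitely
generated centerless and `A` finitely generated abelian, `Fix φ` is finitely generated
iff both `Fix ψ` and `P_φ = {h ∈ Fix ψ | ∃ a, α(h) = γ(a)·a⁻¹}` are finitely
generated. -/
theorem fixed_fg_iff_fix_psi_and_Pdp_fg {H A : Type*} [Group H] [CommGroup A]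
    (hHfg : Group.FG H) (hZ : Subgroup.center H = ⊥) (hA : Group.FG A)
    (ψ : H ≃* H) (γ : A ≃* A) (α : H →* A) (φ : (H × A) ≃* (H × A))
    (hφ : ∀ (h : H) (a : A), φ (h, a) = (ψ h, α h * γ a)) :
    Group.FG ↥(fixedSubgroup φ) ↔
      (Group.FG ↥(fixedSubgroup ψ) ∧ Group.FG ↥(Pdp ψ γ α)) := by
  -- membership criterion for Fix φ
  have hmemφ : ∀ x : H × A, x ∈ fixedSubgroup φ ↔ (ψ x.1 = x.1 ∧ α x.1 * γ x.2 = x.2) := by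
    rintro ⟨h, a⟩
    show φ (h, a) = (h, a) ↔ _
    rw [hφ, Prod.ext_iff]
  -- the projection from Fix φ to H
  set f : ↥(fixedSubgroup φ) →* H := (MonoidHom.fst H A).comp (fixedSubgroup φ).subtype with hf
  have hrange : f.range = Pdp ψ γ α := by
    ext h
    constructor
    · rintro ⟨⟨⟨h', a⟩, hy⟩, rfl⟩
      obtain ⟨h1, h2⟩ := (hmemφ _).mp hy
      refine ⟨h1, a⁻¹, ?_⟩
      rw [map_inv, inv_inv]
      show α h' = (γ a)⁻¹ * a
      have h2' : α h' * γ a = a := h2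
      rw [eq_inv_mul_iff_mul_eq, mul_comm]
      exact h2'
    · rintro ⟨hfix, a, ha⟩
      refine ⟨⟨(h, a⁻¹), (hmemφ _).mpr ⟨hfix, ?_⟩⟩, rfl⟩
      rw [ha, map_inv, mul_right_comm, mul_inv_cancel, one_mul]
  -- the kernel of f is isomorphic to a subgroup of A, hence f.g.
  have hkerfg : Group.FG f.ker := by
    set j : ↥f.ker →* A := (MonoidHom.snd H A).comp ((fixedSubgroup φ).subtype.comp f.ker.subtype)
      with hj
    have hjinj : Function.Injective j := by
      rintro ⟨⟨⟨h₁, a₁⟩, hm₁⟩, hk₁⟩ ⟨⟨⟨h₂, a₂⟩, hm₂⟩, hk₂⟩ heq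
      have e1 : h₁ = 1 := hk₁
      have e2 : h₂ = 1 := hk₂
      have e3 : a₁ = a₂ := heq
      subst e1; subst e2; subst e3; rfl
    have : Group.FG j.range := fg_subgroup_of_comm_fg hA _
    exact Group.fg_of_surjective (f := (MonoidHom.ofInjective hjinj).symm.toMonoidHom)
      (MonoidHom.ofInjective hjinj).symm.surjective
  constructor
  · intro hfixfg
    haveI := hfixfg
    have hPfg : Group.FG (Pdp ψ γ α) := by
      have := Group.fg_range f
      rwa [hrange] at this
    refine ⟨?_, hPfg⟩
    -- Fix ψ is an extension of a f.g. abelian group by Pdp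
    set δ : A →* A := MonoidHom.mk' (fun a => γ a * a⁻¹)
      (by
        intro a b
        show γ (a * b) * (a * b)⁻¹ = (γ a * a⁻¹) * (γ b * b⁻¹)
        rw [map_mul, mul_inv]
        exact mul_mul_mul_comm _ _ _ _) with hδ
    set g : ↥(fixedSubgroup ψ) →* A ⧸ δ.range :=
      (QuotientGroup.mk' δ.range).comp (α.comp (fixedSubgroup ψ).subtype) with hg
    refine fg_of_ker_range_fg g ?_ (fg_subgroup_of_comm_fg (QuotientGroup.fg _) _)
    -- kernel of g is Pdp viewed inside Fix ψ
    have hPle : Pdp ψ γ α ≤ fixedSubgroup ψ := fun x hx => hx.1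
    have hker : g.ker = (Pdp ψ γ α).subgroupOf (fixedSubgroup ψ) := by
      ext ⟨x, hx⟩
      simp only [hg, MonoidHom.mem_ker, MonoidHom.comp_apply, Subgroup.coe_subtype,
        QuotientGroup.mk'_apply, QuotientGroup.eq_one_iff, MonoidHom.mem_range,
        Subgroup.mem_subgroupOf]
      constructor
      · rintro ⟨a, ha⟩
        exact ⟨hx, a, ha.symm⟩
      · rintro ⟨-, a, ha⟩
        exact ⟨a, ha.symm⟩
    rw [hker]
    exact Group.fg_of_surjective (f := (Subgroup.subgroupOfEquivOfLe hPle).symm.toMonoidHom)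
      (Subgroup.subgroupOfEquivOfLe hPle).symm.surjective
  · rintro ⟨-, hPfg⟩
    refine fg_of_ker_range_fg f hkerfg ?_
    rw [hrange]
    exact hPfg
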